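/- arXiv:2005.13444 — 4 statements merged into one kernel-verified Lean document; each statement's English description precedes it below -/
import Mathlib

section
/- In U(gl(N))^{⊗L}, for any d ≥ 1 and any a_1,…,a_d ∈ {1,…,L}, the polarised trace T^{(a_1,…,a_d)} = Σ e_{i_2 i_1}^{(a_1)} e_{i_3 i_2}^{(a_2)} ⋯ e_{i_1 i_d}^{(a_d)} (summation over i_1,…,i_d from 1 to N) commutes with δ(e_{pq}) for all 1 ≤ p,q ≤ N. -/
/-- Commutator of an `ofFn` product expands as a sum over positions,
with the commutator inserted at each position via `Function.update`. -/
lemma comm_ofFn {R : Type*} [Ring R] :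
    ∀ (m : ℕ) (g : Fin m → R) (x : R),
      (List.ofFn g).prod * x - x * (List.ofFn g).prod =
        ∑ s : Fin m, (List.ofFn (Function.update g s (g s * x - x * g s))).prod
  | 0, g, x => by simp
  | (m + 1), g, x => by
    rw [List.ofFn_succ, List.prod_cons, Fin.sum_univ_succ]
    have h0 : (fun i : Fin m => Function.update g 0 (g 0 * x - x * g 0) i.succ)
        = fun i : Fin m => g i.succ := by
      funext t
      simp [Function.update_apply, Fin.succ_ne_zero]
    have hsucc : ∀ s : Fin m,
        (List.ofFn (Function.update g s.succ (g s.succ * x - x * g s.succ))).prod =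
          g 0 * (List.ofFn (Function.update (fun i : Fin m => g i.succ) s
            ((fun i : Fin m => g i.succ) s * x - x * (fun i : Fin m => g i.succ) s))).prod := by
      intro s
      have htail : (fun i : Fin m => Function.update g s.succ (g s.succ * x - x * g s.succ) i.succ)
          = Function.update (fun i : Fin m => g i.succ) s
            ((fun i : Fin m => g i.succ) s * x - x * (fun i : Fin m => g i.succ) s) := by
        funext t
        exact congrFun (Function.update_comp_eq_of_injective g (Fin.succ_injective m) s
          (g s.succ * x - x * g s.succ)) t
      have hhead : Function.update g s.succ (g s.succ * x - x * g s.succ) 0 = g 0 :=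
        Function.update_of_ne (Fin.succ_ne_zero s).symm _ _
      rw [List.ofFn_succ, List.prod_cons, htail, hhead]
    simp only [hsucc]
    rw [← Finset.mul_sum, ← comm_ofFn m (fun i : Fin m => g i.succ) x]
    rw [List.ofFn_succ, List.prod_cons, h0, Function.update_self]
    set P := (List.ofFn fun i : Fin m => g i.succ).prod
    noncomm_ring

/-- The product of an `ofFn` list is additive (for subtraction) in any one slot. -/
lemma prod_update_sub {R : Type*} [Ring R] :
    ∀ (m : ℕ) (g : Fin m → R) (s : Fin m) (c₁ c₂ : R),
      (List.ofFn (Function.update g s (c₁ - c₂))).prod =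
        (List.ofFn (Function.update g s c₁)).prod -
          (List.ofFn (Function.update g s c₂)).prod
  | 0, g, s, _, _ => s.elim0
  | (m + 1), g, s, c₁, c₂ => by
    induction s using Fin.cases with
    | zero =>
      have h : ∀ c : R, (List.ofFn (Function.update g 0 c)).prod =
          c * (List.ofFn fun i : Fin m => g i.succ).prod := by
        intro c
        have htail : (fun i : Fin m => Function.update g 0 c i.succ)
            = fun i : Fin m => g i.succ := by
          funext t
          simp [Function.update_apply, Fin.succ_ne_zero]
        rw [List.ofFn_succ, List.prod_cons, htail, Function.update_self]
      rw [h, h, h, sub_mul]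
    | succ s =>
      have h : ∀ c : R, (List.ofFn (Function.update g s.succ c)).prod =
          g 0 * (List.ofFn (Function.update (fun i : Fin m => g i.succ) s c)).prod := by
        intro c
        have htail : (fun i : Fin m => Function.update g s.succ c i.succ)
            = Function.update (fun i : Fin m => g i.succ) s c := by
          funext t
          exact congrFun (Function.update_comp_eq_of_injective g (Fin.succ_injective m) s c) t
        have hhead : Function.update g s.succ c 0 = g 0 :=
          Function.update_of_ne (Fin.succ_ne_zero s).symm _ _
        rw [List.ofFn_succ, List.prod_cons, htail, hhead]
      rw [h, h, h, prod_update_sub m (fun i : Fin m => g i.succ) s c₁ c₂, mul_sub]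

/-- For any `d ≥ 1` (written `d = n+1`) and any choice of tensor legs
`a : Fin (n+1) → Fin L`, the polarised trace
`T^{(a_1,…,a_d)} = ∑ e_{i_2 i_1}^{(a_1)} e_{i_3 i_2}^{(a_2)} ⋯ e_{i_1 i_d}^{(a_d)}`
commutes with `δ(e_{pq}) = ∑_c e_{pq}^{(c)}`. The `s`-th factor (0-indexed) is
`e (a s) (i (s+1)) (i s)` with cyclic index `s+1` in `Fin (n+1)`. -/
theorem polarised_trace_commutes
    (U : Type*) [Ring U] [Algebra ℂ U] (L N n : ℕ)
    (e : Fin L → Fin N → Fin N → U)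
    (hrel : ∀ (a : Fin L) (p q r s : Fin N),
      e a p q * e a r s - e a r s * e a p q =
        (if q = r then e a p s else 0) - (if s = p then e a r q else 0))
    (hcomm : ∀ (a b : Fin L), a ≠ b → ∀ (p q r s : Fin N),
      e a p q * e b r s = e b r s * e a p q)
    (a : Fin (n + 1) → Fin L) :
    ∀ p q : Fin N,
      (∑ i : Fin (n + 1) → Fin N,
          ((List.finRange (n + 1)).map (fun s => e (a s) (i (s + 1)) (i s))).prod) *
          (∑ c : Fin L, e c p q) =
        (∑ c : Fin L, e c p q) *
          (∑ i : Fin (n + 1) → Fin N,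
            ((List.finRange (n + 1)).map (fun s => e (a s) (i (s + 1)) (i s))).prod) := by
  intro p q
  simp only [← List.ofFn_eq_map]
  set D : U := ∑ c : Fin L, e c p q with hD
  set f : (Fin (n + 1) → Fin N) → Fin (n + 1) → U :=
    fun i u => e (a u) (i (u + 1)) (i u) with hf
  rw [← sub_eq_zero]
  set A : (Fin (n + 1) → Fin N) → Fin (n + 1) → U := fun i s =>
    (List.ofFn (Function.update (f i) s
      (if i s = p then e (a s) (i (s + 1)) q else 0))).prod with hA
  set B : (Fin (n + 1) → Fin N) → Fin (n + 1) → U := fun i s =>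
    (List.ofFn (Function.update (f i) s
      (if q = i (s + 1) then e (a s) p (i s) else 0))).prod with hB
  have hcommD : ∀ (i : Fin (n + 1) → Fin N) (s : Fin (n + 1)),
      f i s * D - D * f i s =
        (if i s = p then e (a s) (i (s + 1)) q else 0) -
          (if q = i (s + 1) then e (a s) p (i s) else 0) := by
    intro i s
    rw [hD, Finset.mul_sum, Finset.sum_mul, ← Finset.sum_sub_distrib]
    rw [Finset.sum_eq_single (a s)]
    · exact hrel (a s) (i (s + 1)) (i s) p q
    · intro c _ hc
      rw [hcomm (a s) c (Ne.symm hc), sub_self]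
    · intro h; exact absurd (Finset.mem_univ _) h
  have step : ∀ i : Fin (n + 1) → Fin N,
      (List.ofFn (f i)).prod * D - D * (List.ofFn (f i)).prod =
        ∑ s : Fin (n + 1), (A i s - B i s) := by
    intro i
    rw [comm_ofFn]
    refine Finset.sum_congr rfl fun s _ => ?_
    rw [hcommD i s, prod_update_sub]
  rw [Finset.sum_mul, Finset.mul_sum, ← Finset.sum_sub_distrib]
  have main : ∑ i : Fin (n + 1) → Fin N,
      ((List.ofFn (f i)).prod * D - D * (List.ofFn (f i)).prod) =
      (∑ s : Fin (n + 1), ∑ i : Fin (n + 1) → Fin N, A i s) -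
        (∑ s : Fin (n + 1), ∑ i : Fin (n + 1) → Fin N, B i s) := by
    rw [Finset.sum_congr rfl fun i _ => step i]
    rw [Finset.sum_comm]
    rw [← Finset.sum_sub_distrib]
    exact Finset.sum_congr rfl fun s _ => Finset.sum_sub_distrib _ _
  rw [main]
  rw [sub_eq_zero]
  have key : ∀ s : Fin (n + 1),
      ∑ i : Fin (n + 1) → Fin N, B i s = ∑ i : Fin (n + 1) → Fin N, A i (s + 1) := by
    intro s
    set σ : (Fin (n + 1) → Fin N) ≃ (Fin (n + 1) → Fin N) :=
      Equiv.piCongrRight (fun t => if t = s + 1 then Equiv.swap p q else Equiv.refl (Fin N))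
      with hσdef
    have hσ : ∀ (i : Fin (n + 1) → Fin N) (t : Fin (n + 1)),
        σ i t = if t = s + 1 then Equiv.swap p q (i t) else i t := by
      intro i t
      simp only [hσdef, Equiv.piCongrRight_apply, Pi.map_apply]
      split <;> simp
    refine Fintype.sum_equiv σ _ _ fun i => ?_
    set j : Fin (n + 1) → Fin N := σ i with hj
    have hjt : ∀ t, j t = if t = s + 1 then Equiv.swap p q (i t) else i t := hσ i
    by_cases hq : q = i (s + 1)
    · -- main case: the two insertion products coincide
      have hjp : j (s + 1) = p := by
        rw [hjt, if_pos rfl, ← hq, Equiv.swap_apply_right]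
      have hBval : B i s = (List.ofFn (Function.update (f i) s (e (a s) p (i s)))).prod := by
        rw [hB]; simp only [if_pos hq]
      have hAval : A j (s + 1) =
          (List.ofFn (Function.update (f j) (s + 1)
            (e (a (s + 1)) (j (s + 1 + 1)) q))).prod := by
        rw [hA]; simp only [if_pos hjp]
      rw [hBval, hAval]
      congr 1
      congr 1
      funext t
      simp only [Function.update_apply, hf]
      by_cases h1 : t = s <;> by_cases h2 : t = s + 1
      · -- t = s and t = s + 1, so s = s + 1 (the d = 1 wrap-around case)
        have hss : s = s + 1 := h1 ▸ h2
        have hq' : i s = q := by rw [hss, ← hq]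
        have hs2 : s + 1 + 1 = s + 1 := congrArg (· + 1) hss.symm
        rw [if_pos h1, if_pos h2, hs2, hjp, ← hss, hq']
      · -- t = s only
        rw [if_pos h1, if_neg h2]
        have hns : ¬ s = s + 1 := fun h => h2 (h1.trans h)
        have hjs : j s = i s := by rw [hjt, if_neg hns]
        rw [h1, hjp, hjs]
      · -- t = s + 1 only
        rw [if_neg h1, if_pos h2]
        have hne : s + 1 + 1 ≠ s + 1 := fun h => h1 (h2.trans (add_right_cancel h))
        have hj2 : j (s + 1 + 1) = i (s + 1 + 1) := by rw [hjt, if_neg hne]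
        rw [h2, hj2, ← hq]
      · -- generic position
        rw [if_neg h1, if_neg h2]
        have hjt0 : j t = i t := by rw [hjt, if_neg h2]
        have hjt1 : j (t + 1) = i (t + 1) := by
          rw [hjt, if_neg (fun h => h1 (add_right_cancel h))]
        rw [hjt0, hjt1]
    · -- both sides vanish
      have hjp : j (s + 1) ≠ p := by
        intro h
        rw [hjt, if_pos rfl] at h
        apply hq
        have h' := congrArg (Equiv.swap p q) h
        rw [Equiv.swap_apply_self, Equiv.swap_apply_left] at h'
        exact h'.symm
      have hB0 : B i s = 0 := by
        rw [hB]
        simp only [if_neg hq]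
        exact List.prod_eq_zero (List.mem_ofFn.mpr ⟨s, Function.update_self _ _ _⟩)
      have hA0 : A j (s + 1) = 0 := by
        rw [hA]
        simp only [if_neg hjp]
        exact List.prod_eq_zero (List.mem_ofFn.mpr ⟨s + 1, Function.update_self _ _ _⟩)
      rw [hB0, hA0]
  have reindex : ∑ s : Fin (n + 1), ∑ i : Fin (n + 1) → Fin N, A i (s + 1) =
      ∑ s : Fin (n + 1), ∑ i : Fin (n + 1) → Fin N, A i s :=
    Fintype.sum_equiv (Equiv.addRight (1 : Fin (n + 1)))
      (fun s => ∑ i : Fin (n + 1) → Fin N, A i (s + 1)) _ (fun s => by simp)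
  rw [Finset.sum_congr rfl fun s _ => key s, reindex]
end

section
/- In the algebra A^{gen} over ℂ[a_0, a'_0, a_1, a_2, a_3, a_4, a_5, a_6, a_8, a_9] with relations [A,B]=C, [A,C]= a_0B² + a_1{A,B} + a_2A² + a_4B + a_5A + a_8, [B,C]= a'_0A³ − a_1B² − a_2{A,B} + a_3A² − a_5B + a_6A + a_9, the element Ω = x_1 A + x_2 B + x_3 A² + x_4{A,B} + x_5 B² + x_6 A³ + x_7 ABA + x_8 BC − x_8 AB² + x_9 A⁴ + x_{10} B³ + C², with x_1 = (1/6)(12a_9 + 3a_0a_5a'_0 + 2a_4a_3 − a_4a'_0a_1 − 6a_6a_1), x_2 = (1/3)(−6a_8 − 3a_4a_2 + a_0a_4a'_0 + a_0a_6 + 6a_5a_1), x_3 = (1/6)(6a_6 + 3a_4a'_0 + 3a_0a_2a'_0 − 4a_3a_1 − a'_0a_1²), x_4 = (1/3)(−3a_5 + a_0a_3 + 3a_2a_1 + a_0a'_0a_1), x_5 = (1/3)(−3a_4 − 4a_0a_2 + a_0²a'_0 + 6a_1²), x_6 = (1/3)(2a_3 − a'_0a_1), x_7 = −2a_2 + a_0a'_0,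 x_8 = 2a_1, x_9 = a'_0/2, x_{10} = −(2/3)a_0, is central: it commutes with A, B, and C. -/
set_option maxHeartbeats 12000000 in
/-- the Casimir element `Ω` of the algebra `𝒜^{gen}`. In any associative
algebra with elements `A, B, C` and central parameters `a₀, a₀', a₁, …, a₉` satisfying
the defining relations of `𝒜^{gen}`, the element `Ω` (with the explicit coefficients
`x₁, …, x₁₀`) commutes with `A`, `B` and `C`. -/
theorem Agen_casimir_central
    (U : Type*) [Ring U] [Algebra ℂ U]
    (A B C a0 a0' a1 a2 a3 a4 a5 a6 a8 a9 : U)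
    (hcen : ∀ p ∈ ({a0, a0', a1, a2, a3, a4, a5, a6, a8, a9} : Set U),
      ∀ x : U, p * x = x * p)
    (r1 : A * B - B * A = C)
    (r2 : A * C - C * A =
      a0 * B ^ 2 + a1 * (A * B + B * A) + a2 * A ^ 2 + a4 * B + a5 * A + a8)
    (r3 : B * C - C * B =
      a0' * A ^ 3 - a1 * B ^ 2 - a2 * (A * B + B * A) + a3 * A ^ 2 - a5 * B +
        a6 * A + a9)
    (x1 x2 x3 x4 x5 x6 x7 x8 x9 x10 Ω : U)
    (hx1 : x1 = (1/6 : ℂ) •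
      (12 * a9 + 3 * a0 * a5 * a0' + 2 * a4 * a3 - a4 * a0' * a1 - 6 * a6 * a1))
    (hx2 : x2 = (1/3 : ℂ) •
      (-(6 * a8) - 3 * a4 * a2 + a0 * a4 * a0' + a0 * a6 + 6 * a5 * a1))
    (hx3 : x3 = (1/6 : ℂ) •
      (6 * a6 + 3 * a4 * a0' + 3 * a0 * a2 * a0' - 4 * a3 * a1 - a0' * a1 ^ 2))
    (hx4 : x4 = (1/3 : ℂ) •
      (-(3 * a5) + a0 * a3 + 3 * a2 * a1 + a0 * a0' * a1))
    (hx5 : x5 = (1/3 : ℂ) •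
      (-(3 * a4) - 4 * a0 * a2 + a0 ^ 2 * a0' + 6 * a1 ^ 2))
    (hx6 : x6 = (1/3 : ℂ) • (2 * a3 - a0' * a1))
    (hx7 : x7 = -(2 * a2) + a0 * a0')
    (hx8 : x8 = 2 * a1)
    (hx9 : x9 = (1/2 : ℂ) • a0')
    (hx10 : x10 = -((2/3 : ℂ) • a0))
    (hΩ : Ω = x1 * A + x2 * B + x3 * A ^ 2 + x4 * (A * B + B * A) + x5 * B ^ 2 +
      x6 * A ^ 3 + x7 * (A * B * A) + x8 * (B * C) - x8 * (A * B ^ 2) +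
      x9 * A ^ 4 + x10 * B ^ 3 + C ^ 2) :
    Ω * A = A * Ω ∧ Ω * B = B * Ω ∧ Ω * C = C * Ω := by
  have cen0 : ∀ x : U, a0 * x = x * a0 := hcen a0 (by simp)
  have cen1 : ∀ x : U, a0' * x = x * a0' := hcen a0' (by simp)
  have cen2 : ∀ x : U, a1 * x = x * a1 := hcen a1 (by simp)
  have cen3 : ∀ x : U, a2 * x = x * a2 := hcen a2 (by simp)
  have cen4 : ∀ x : U, a3 * x = x * a3 := hcen a3 (by simp)
  have cen5 : ∀ x : U, a4 * x = x * a4 := hcen a4 (by simp)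
  have cen6 : ∀ x : U, a5 * x = x * a5 := hcen a5 (by simp)
  have cen7 : ∀ x : U, a6 * x = x * a6 := hcen a6 (by simp)
  have cen8 : ∀ x : U, a8 * x = x * a8 := hcen a8 (by simp)
  have cen9 : ∀ x : U, a9 * x = x * a9 := hcen a9 (by simp)
  letI : Algebra (Subring.center U) U :=
    ((Subring.center U).subtype).toAlgebra' (fun c x => by
      simpa using (Subring.mem_center_iff.mp c.2 x).symm)
  have hsm : ∀ (z : Subring.center U) (x : U), z • x = (z : U) * x := fun z x => rfl
  have hm0 : a0 ∈ Subring.center U := Subring.mem_center_iff.mpr (fun g => (cen0 g).symm)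
  set za0 : Subring.center U := (⟨a0, hm0⟩ : Subring.center U) with hza0d
  have hcza0 : ((za0 : Subring.center U) : U) = a0 := by rw [hza0d]
  have hm1 : a0' ∈ Subring.center U := Subring.mem_center_iff.mpr (fun g => (cen1 g).symm)
  set za0p : Subring.center U := (⟨a0', hm1⟩ : Subring.center U) with hza0pd
  have hcza0p : ((za0p : Subring.center U) : U) = a0' := by rw [hza0pd]
  have hm2 : a1 ∈ Subring.center U := Subring.mem_center_iff.mpr (fun g => (cen2 g).symm)
  set za1 : Subring.center U := (⟨a1, hm2⟩ : Subring.center U) with hza1d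
  have hcza1 : ((za1 : Subring.center U) : U) = a1 := by rw [hza1d]
  have hm3 : a2 ∈ Subring.center U := Subring.mem_center_iff.mpr (fun g => (cen3 g).symm)
  set za2 : Subring.center U := (⟨a2, hm3⟩ : Subring.center U) with hza2d
  have hcza2 : ((za2 : Subring.center U) : U) = a2 := by rw [hza2d]
  have hm4 : a3 ∈ Subring.center U := Subring.mem_center_iff.mpr (fun g => (cen4 g).symm)
  set za3 : Subring.center U := (⟨a3, hm4⟩ : Subring.center U) with hza3d
  have hcza3 : ((za3 : Subring.center U) : U) = a3 := by rw [hza3d]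
  have hm5 : a4 ∈ Subring.center U := Subring.mem_center_iff.mpr (fun g => (cen5 g).symm)
  set za4 : Subring.center U := (⟨a4, hm5⟩ : Subring.center U) with hza4d
  have hcza4 : ((za4 : Subring.center U) : U) = a4 := by rw [hza4d]
  have hm6 : a5 ∈ Subring.center U := Subring.mem_center_iff.mpr (fun g => (cen6 g).symm)
  set za5 : Subring.center U := (⟨a5, hm6⟩ : Subring.center U) with hza5d
  have hcza5 : ((za5 : Subring.center U) : U) = a5 := by rw [hza5d]
  have hm7 : a6 ∈ Subring.center U := Subring.mem_center_iff.mpr (fun g => (cen7 g).symm)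
  set za6 : Subring.center U := (⟨a6, hm7⟩ : Subring.center U) with hza6d
  have hcza6 : ((za6 : Subring.center U) : U) = a6 := by rw [hza6d]
  have hm8 : a8 ∈ Subring.center U := Subring.mem_center_iff.mpr (fun g => (cen8 g).symm)
  set za8 : Subring.center U := (⟨a8, hm8⟩ : Subring.center U) with hza8d
  have hcza8 : ((za8 : Subring.center U) : U) = a8 := by rw [hza8d]
  have hm9 : a9 ∈ Subring.center U := Subring.mem_center_iff.mpr (fun g => (cen9 g).symm)
  set za9 : Subring.center U := (⟨a9, hm9⟩ : Subring.center U) with hza9d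
  have hcza9 : ((za9 : Subring.center U) : U) = a9 := by rw [hza9d]
  have hn2 : (((2:Subring.center U)) : U) = 2 := by
    exact_mod_cast Subring.coe_natCast (Subring.center U) 2
  have hn3 : (((3:Subring.center U)) : U) = 3 := by
    exact_mod_cast Subring.coe_natCast (Subring.center U) 3
  have hn4 : (((4:Subring.center U)) : U) = 4 := by
    exact_mod_cast Subring.coe_natCast (Subring.center U) 4
  have hn6 : (((6:Subring.center U)) : U) = 6 := by
    exact_mod_cast Subring.coe_natCast (Subring.center U) 6
  have hn12 : (((12:Subring.center U)) : U) = 12 := by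
    exact_mod_cast Subring.coe_natCast (Subring.center U) 12
  have mAB0 : A * B = B * A + C := by rw [← r1]; noncomm_ring
  have mAC0 : A * C = C * A + (a0*(B*B) + a1*(A*B) + a1*(B*A) + a2*(A*A) + a4*B + a5*A
      + a8*(1:U)) := by
    have h := r2; rw [sub_eq_iff_eq_add'] at h; rw [h]
    all_goals noncomm_ring
  have mBC0 : B * C = C * B + a0'*(A*(A*A)) - a1*(B*B) - a2*(A*B) - a2*(B*A) + a3*(A*A)
      - a5*B + a6*A + a9*(1:U) := by
    have h := r3; rw [sub_eq_iff_eq_add'] at h; rw [h]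
    all_goals noncomm_ring
  have sAB : ∀ x : U, A * (B * x) = B * (A * x) + C * x := fun x => by
    rw [← mul_assoc, mAB0]
    all_goals noncomm_ring
  have sAC0 : A * C = C * A + za0 • (B*B) + za1 • (A*B) + za1 • (B*A) + za2 • (A*A)
      + za4 • B + za5 • A + za8 • (1:U) := by
    simp only [hsm, hcza0, hcza0p, hcza1, hcza2, hcza3, hcza4, hcza5, hcza6, hcza8, hcza9]
    rw [mAC0]
    all_goals noncomm_ring
  have sAC : ∀ x : U, A * (C * x) = C * (A * x) + za0 • (B*(B*x)) + za1 • (A*(B*x))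
      + za1 • (B*(A*x)) + za2 • (A*(A*x)) + za4 • (B*x) + za5 • (A*x) + za8 • x := by
    intro x
    simp only [hsm, hcza0, hcza0p, hcza1, hcza2, hcza3, hcza4, hcza5, hcza6, hcza8, hcza9]
    rw [← mul_assoc, mAC0]
    all_goals noncomm_ring
  have sBC0 : B * C = C * B + za0p • (A*(A*A)) - za1 • (B*B) - za2 • (A*B) - za2 • (B*A)
      + za3 • (A*A) - za5 • B + za6 • A + za9 • (1:U) := by
    simp only [hsm, hcza0, hcza0p, hcza1, hcza2, hcza3, hcza4, hcza5, hcza6, hcza8, hcza9]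
    rw [mBC0]
    all_goals noncomm_ring
  have sBC : ∀ x : U, B * (C * x) = C * (B * x) + za0p • (A*(A*(A*x))) - za1 • (B*(B*x))
      - za2 • (A*(B*x)) - za2 • (B*(A*x)) + za3 • (A*(A*x)) - za5 • (B*x) + za6 • (A*x)
      + za9 • x := by
    intro x
    simp only [hsm, hcza0, hcza0p, hcza1, hcza2, hcza3, hcza4, hcza5, hcza6, hcza8, hcza9]
    rw [← mul_assoc, mBC0]
    all_goals noncomm_ring
  set w1 : Subring.center U := 12*za9 + 3*za0*za5*za0p + 2*za4*za3 - za4*za0p*za1 - 6*za6*za1 with hw1d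
  have hWw1 : ((w1 : Subring.center U) : U) = 12*a9 + 3*a0*a5*a0' + 2*a4*a3 - a4*a0'*a1 - 6*a6*a1 := by
    rw [hw1d]; push_cast [hcza0, hcza0p, hcza1, hcza2, hcza3, hcza4, hcza5, hcza6, hcza8, hcza9, hn2, hn3, hn4, hn6, hn12]
    norm_num
  set w2 : Subring.center U := 2*(-(6*za8) - 3*za4*za2 + za0*za4*za0p + za0*za6 + 6*za5*za1) with hw2d
  have hWw2 : ((w2 : Subring.center U) : U) = 2*(-(6*a8) - 3*a4*a2 + a0*a4*a0' + a0*a6 + 6*a5*a1) := by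
    rw [hw2d]; push_cast [hcza0, hcza0p, hcza1, hcza2, hcza3, hcza4, hcza5, hcza6, hcza8, hcza9, hn2, hn3, hn4, hn6, hn12]
    norm_num
  set w3 : Subring.center U := 6*za6 + 3*za4*za0p + 3*za0*za2*za0p - 4*za3*za1 - za0p*za1^2 with hw3d
  have hWw3 : ((w3 : Subring.center U) : U) = 6*a6 + 3*a4*a0' + 3*a0*a2*a0' - 4*a3*a1 - a0'*a1^2 := by
    rw [hw3d]; push_cast [hcza0, hcza0p, hcza1, hcza2, hcza3, hcza4, hcza5, hcza6, hcza8, hcza9, hn2, hn3, hn4, hn6, hn12]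
    norm_num
  set w4 : Subring.center U := 2*(-(3*za5) + za0*za3 + 3*za2*za1 + za0*za0p*za1) with hw4d
  have hWw4 : ((w4 : Subring.center U) : U) = 2*(-(3*a5) + a0*a3 + 3*a2*a1 + a0*a0'*a1) := by
    rw [hw4d]; push_cast [hcza0, hcza0p, hcza1, hcza2, hcza3, hcza4, hcza5, hcza6, hcza8, hcza9, hn2, hn3, hn4, hn6, hn12]
    norm_num
  set w5 : Subring.center U := 2*(-(3*za4) - 4*za0*za2 + za0^2*za0p + 6*za1^2) with hw5d
  have hWw5 : ((w5 : Subring.center U) : U) = 2*(-(3*a4) - 4*a0*a2 + a0^2*a0' + 6*a1^2) := by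
    rw [hw5d]; push_cast [hcza0, hcza0p, hcza1, hcza2, hcza3, hcza4, hcza5, hcza6, hcza8, hcza9, hn2, hn3, hn4, hn6, hn12]
    norm_num
  set w6 : Subring.center U := 2*(2*za3 - za0p*za1) with hw6d
  have hWw6 : ((w6 : Subring.center U) : U) = 2*(2*a3 - a0'*a1) := by
    rw [hw6d]; push_cast [hcza0, hcza0p, hcza1, hcza2, hcza3, hcza4, hcza5, hcza6, hcza8, hcza9, hn2, hn3, hn4, hn6, hn12]
    norm_num
  set w7 : Subring.center U := 6*(-(2*za2) + za0*za0p) with hw7d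
  have hWw7 : ((w7 : Subring.center U) : U) = 6*(-(2*a2) + a0*a0') := by
    rw [hw7d]; push_cast [hcza0, hcza0p, hcza1, hcza2, hcza3, hcza4, hcza5, hcza6, hcza8, hcza9, hn2, hn3, hn4, hn6, hn12]
    norm_num
  set w8 : Subring.center U := 6*(2*za1) with hw8d
  have hWw8 : ((w8 : Subring.center U) : U) = 6*(2*a1) := by
    rw [hw8d]; push_cast [hcza0, hcza0p, hcza1, hcza2, hcza3, hcza4, hcza5, hcza6, hcza8, hcza9, hn2, hn3, hn4, hn6, hn12]
    norm_num
  set w9 : Subring.center U := 3*za0p with hw9d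
  have hWw9 : ((w9 : Subring.center U) : U) = 3*a0' := by
    rw [hw9d]; push_cast [hcza0, hcza0p, hcza1, hcza2, hcza3, hcza4, hcza5, hcza6, hcza8, hcza9, hn2, hn3, hn4, hn6, hn12]
    norm_num
  set w10 : Subring.center U := -(4*za0) with hw10d
  have hWw10 : ((w10 : Subring.center U) : U) = -(4*a0) := by
    rw [hw10d]; push_cast [hcza0, hcza0p, hcza1, hcza2, hcza3, hcza4, hcza5, hcza6, hcza8, hcza9, hn2, hn3, hn4, hn6, hn12]
    norm_num
  have hq2 : ∀ y : U, ((2:U)) * y = ((2:ℂ)) • y := fun y => by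
    rw [Algebra.smul_def, map_ofNat]
  have hq3 : ∀ y : U, ((3:U)) * y = ((3:ℂ)) • y := fun y => by
    rw [Algebra.smul_def, map_ofNat]
  have hq4 : ∀ y : U, ((4:U)) * y = ((4:ℂ)) • y := fun y => by
    rw [Algebra.smul_def, map_ofNat]
  have hq6 : ∀ y : U, ((6:U)) * y = ((6:ℂ)) • y := fun y => by
    rw [Algebra.smul_def, map_ofNat]
  have t1 : ∀ y : U, (1/6 : ℂ) • (w1 • y) = x1 * y := fun y => by
    rw [hsm, hWw1, hx1, smul_mul_assoc]
  have t2 : ∀ y : U, (1/6 : ℂ) • (w2 • y) = x2 * y := fun y => by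
    rw [hsm, hWw2, hx2, mul_assoc, hq2, smul_smul, smul_mul_assoc]
    norm_num
  have t3 : ∀ y : U, (1/6 : ℂ) • (w3 • y) = x3 * y := fun y => by
    rw [hsm, hWw3, hx3, smul_mul_assoc]
  have t4 : ∀ y : U, (1/6 : ℂ) • (w4 • y) = x4 * y := fun y => by
    rw [hsm, hWw4, hx4, mul_assoc, hq2, smul_smul, smul_mul_assoc]
    norm_num
  have t5 : ∀ y : U, (1/6 : ℂ) • (w5 • y) = x5 * y := fun y => by
    rw [hsm, hWw5, hx5, mul_assoc, hq2, smul_smul, smul_mul_assoc]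
    norm_num
  have t6 : ∀ y : U, (1/6 : ℂ) • (w6 • y) = x6 * y := fun y => by
    rw [hsm, hWw6, hx6, mul_assoc, hq2, smul_smul, smul_mul_assoc]
    norm_num
  have t7 : ∀ y : U, (1/6 : ℂ) • (w7 • y) = x7 * y := fun y => by
    rw [hsm, hWw7, hx7, mul_assoc, hq6, smul_smul]
    norm_num
  have t8 : ∀ y : U, (1/6 : ℂ) • (w8 • y) = x8 * y := fun y => by
    rw [hsm, hWw8, hx8, mul_assoc, hq6, smul_smul]
    norm_num
  have t9 : ∀ y : U, (1/6 : ℂ) • (w9 • y) = x9 * y := fun y => by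
    rw [hsm, hWw9, hx9, mul_assoc, hq3, smul_smul, smul_mul_assoc]
    norm_num
  have t10 : ∀ y : U, (1/6 : ℂ) • (w10 • y) = x10 * y := fun y => by
    rw [hsm, hWw10, hx10, neg_mul, smul_neg, mul_assoc, hq4, smul_smul, neg_mul,
      smul_mul_assoc]
    norm_num
  have t12 : ∀ y : U, (1/6 : ℂ) • (((6 : Subring.center U)) • y) = y := fun y => by
    rw [hsm, hn6, hq6, smul_smul]
    norm_num
  set E : U := w1 • A + w2 • B + w3 • (A*A) + w4 • (A*B + B*A) + w5 • (B*B) + w6 • (A*(A*A)) + w7 • (A*(B*A)) + w8 • (B*C) - w8 • (A*(B*B)) + w9 • (A*(A*(A*A))) + w10 • (B*(B*B)) + (6 : Subring.center U) • (C*C) with hEd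
  simp only [pow_succ, pow_zero, one_mul, mul_assoc] at hΩ
  have hΩE : Ω = (1/6 : ℂ) • E := by
    rw [hΩ, hEd]
    simp only [smul_add, smul_sub, mul_add, t1, t2, t3, t4, t5, t6, t7, t8, t9, t10, t12]
  have hEA : E * A = A * E := by
    rw [hEd]
    simp only [mul_add, add_mul, mul_sub, sub_mul, smul_mul_assoc, mul_smul_comm,
      smul_add, smul_sub, smul_smul, mul_assoc, mul_one, one_mul,
      mAB0, sAB, sAC0, sAC, sBC0, sBC]
    module
  have hEB : E * B = B * E := by
    rw [hEd]
    simp only [mul_add, add_mul, mul_sub, sub_mul, smul_mul_assoc, mul_smul_comm,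
      smul_add, smul_sub, smul_smul, mul_assoc, mul_one, one_mul,
      mAB0, sAB, sAC0, sAC, sBC0, sBC]
    module
  have hEAB : E * (A * B) = (A * B) * E := by
    rw [← mul_assoc, hEA, mul_assoc, hEB, ← mul_assoc]
  have hEBA : E * (B * A) = (B * A) * E := by
    rw [← mul_assoc, hEB, mul_assoc, hEA, ← mul_assoc]
  have hEC : E * C = C * E := by
    rw [← r1, mul_sub, sub_mul, hEAB, hEBA]
  refine ⟨?_, ?_, ?_⟩
  · rw [hΩE, smul_mul_assoc, hEA, mul_smul_comm]
  · rw [hΩE, smul_mul_assoc, hEB, mul_smul_comm]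
  · rw [hΩE, smul_mul_assoc, hEC, mul_smul_comm]
end

section
/- Let Φ be an element of the cyclic-word space F_cycl of the free algebra on A, B, C given by Φ = [ABC] − [BAC] − (a'_0/4)[A⁴] − (a_3/3)[A³] + (a_0/3)[B³] + a_2[A²B] + a_1[AB²] − (a_6/2)[A²] + a_5[AB] + (a_4/2)[B²] − (1/2)[C²] − a_9[A] + a_8[B]. Then the cyclic derivatives ∂Φ/∂C = 0, ∂Φ/∂B = 0, ∂Φ/∂A = 0 are exactly the three defining relations of A^{gen}: [A,B] = C, [A,C] = a_0B² + a_1{A,B} + a_2A² + a_4B + a_5A + a_8, and [B,C] = a'_0A³ − a_1B² − a_2{A,B} + a_3A² − a_5B + a_6A + a_9. -/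
noncomputable section

/-- Ground ring with the central parameters; index convention:
`0 ↦ a₀, 1 ↦ a₀', 2 ↦ a₁, 3 ↦ a₂, 4 ↦ a₃, 5 ↦ a₄, 6 ↦ a₅, 7 ↦ a₆, 8 ↦ a₈, 9 ↦ a₉`. -/
abbrev PRing := MvPolynomial (Fin 10) ℂ

abbrev FA := FreeAlgebra PRing (Fin 3)

def gA : FA := FreeAlgebra.ι PRing 0
def gB : FA := FreeAlgebra.ι PRing 1
def gC : FA := FreeAlgebra.ι PRing 2

def pa (i : Fin 10) : FA := algebraMap PRing FA (MvPolynomial.X i)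

/-- The value in the free algebra of a word in the generators (word in `A=0, B=1, C=2`). -/
def wordVal (w : List (Fin 3)) : FA := (w.map (FreeAlgebra.ι PRing)).prod

/-- The cyclic derivative `∂[x_{i₁}⋯x_{i_r}]/∂x_j = ∑_{s : i_s = j}
x_{i_{s+1}}⋯x_{i_r} x_{i_1}⋯x_{i_{s-1}}` of a cyclic word with respect to the
generator `j`. -/
def cycDer (j : Fin 3) (w : List (Fin 3)) : FA :=
  ∑ s ∈ Finset.range w.length,
    if w[s]? = some j then wordVal ((w.rotate (s + 1)).dropLast) else 0

/-- The cyclic derivative of the Calabi–Yau potential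
`Φ = [ABC] - [BAC] - (a₀'/4)[A⁴] - (a₃/3)[A³] + (a₀/3)[B³] + a₂[A²B] + a₁[AB²]
 - (a₆/2)[A²] + a₅[AB] + (a₄/2)[B²] - (1/2)[C²] - a₉[A] + a₈[B]`
with respect to generator `j`. -/
def DPhi (j : Fin 3) : FA :=
  cycDer j [0, 1, 2] - cycDer j [1, 0, 2]
    - (1/4 : ℂ) • (pa 1 * cycDer j [0, 0, 0, 0])
    - (1/3 : ℂ) • (pa 4 * cycDer j [0, 0, 0])
    + (1/3 : ℂ) • (pa 0 * cycDer j [1, 1, 1])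
    + pa 3 * cycDer j [0, 0, 1]
    + pa 2 * cycDer j [0, 1, 1]
    - (1/2 : ℂ) • (pa 7 * cycDer j [0, 0])
    + pa 6 * cycDer j [0, 1]
    + (1/2 : ℂ) • (pa 5 * cycDer j [1, 1])
    - (1/2 : ℂ) • cycDer j [2, 2]
    - pa 9 * cycDer j [0]
    + pa 8 * cycDer j [1]

/-- the equations `∂Φ/∂C = 0`, `∂Φ/∂B = 0`, `∂Φ/∂A = 0` are exactly the
three defining relations of `𝒜^{gen}`: each cyclic derivative equals the difference of
the two sides of the corresponding relation. -/
theorem potential_gives_Agen_relations :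
    DPhi 2 = gA * gB - gB * gA - gC ∧
    DPhi 1 = gC * gA - gA * gC +
      (pa 0 * gB ^ 2 + pa 2 * (gA * gB + gB * gA) + pa 3 * gA ^ 2 +
        pa 5 * gB + pa 6 * gA + pa 8) ∧
    DPhi 0 = gB * gC - gC * gB -
      (pa 1 * gA ^ 3 - pa 2 * gB ^ 2 - pa 3 * (gA * gB + gB * gA) + pa 4 * gA ^ 2 -
        pa 6 * gB + pa 7 * gA + pa 9) := by
  refine ⟨?_, ?_, ?_⟩ <;>
  · simp [DPhi, cycDer, Finset.sum_range_succ, List.rotate, wordVal, gA, gB, gC,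
      mul_add, add_mul, smul_add, pow_succ, mul_assoc]
    simp only [← add_smul]
    norm_num <;> abel

end
end

section
/- Let H be the Hahn algebra over ℂ[δ_1, δ_2, ε_1, ε_2, Λ] generated by H_1, H_2 with H_3 := [H_1,H_2], subject to [H_2,H_3] = −2{H_1,H_2} + δ_2 H_2 + δ_1 H_1 + ε_1 and [H_1,H_3] = 2H_1² − δ_2 H_1 + H_2 + ε_2. Then H_3² − (2{H_1²,H_2} − δ_2{H_1,H_2} + 2ε_2 H_2 − (4+δ_1)H_1² + H_2² − 2(ε_1 − δ_2)H_1) is central in H, i.e., it commutes with H_1 and H_2. -/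
private lemma mv {R : Type*} [Ring R] {p g : R} (h : p * g = g * p) (x : R) :
    g * (p * x) = p * (g * x) := by rw [← mul_assoc, ← h, mul_assoc]

/-- in the Hahn algebra generated by `H₁, H₂` (with `H₃ = [H₁,H₂]` and
central parameters `δ₁, δ₂, ε₁, ε₂`), the element
`H₃² - (2{H₁²,H₂} - δ₂{H₁,H₂} + 2ε₂H₂ - (4+δ₁)H₁² + H₂² - 2(ε₁-δ₂)H₁)`
is central, i.e. it commutes with `H₁` and `H₂`. -/
theorem hahn_casimir_central
    (U : Type*) [Ring U] [Algebra ℂ U]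
    (H1 H2 H3 d1 d2 e1 e2 : U)
    (hcen : ∀ p ∈ ({d1, d2, e1, e2} : Set U), ∀ x : U, p * x = x * p)
    (hH3 : H3 = H1 * H2 - H2 * H1)
    (h23 : H2 * H3 - H3 * H2 = -(2 * (H1 * H2 + H2 * H1)) + d2 * H2 + d1 * H1 + e1)
    (h13 : H1 * H3 - H3 * H1 = 2 * H1 ^ 2 - d2 * H1 + H2 + e2)
    (Q : U)
    (hQ : Q = H3 ^ 2 - (2 * (H1 ^ 2 * H2 + H2 * H1 ^ 2) - d2 * (H1 * H2 + H2 * H1) +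
      2 * e2 * H2 - (4 + d1) * H1 ^ 2 + H2 ^ 2 - 2 * (e1 - d2) * H1)) :
    Q * H1 = H1 * Q ∧ Q * H2 = H2 * Q := by
  have cd1 := hcen d1 (by simp)
  have cd2 := hcen d2 (by simp)
  have ce1 := hcen e1 (by simp)
  have ce2 := hcen e2 (by simp)
  have c2 : ∀ x : U, (2:U) * x = x * 2 := fun x => by
    simpa using (Nat.cast_commute 2 x).eq
  have c4 : ∀ x : U, (4:U) * x = x * 4 := fun x => by
    simpa using (Nat.cast_commute 4 x).eq
  have e13 : (H1 * H3 - H3 * H1) - (2 * H1 ^ 2 - d2 * H1 + H2 + e2) = 0 :=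
    sub_eq_zero.mpr h13
  have e23 : (H2 * H3 - H3 * H2) -
      (-(2 * (H1 * H2 + H2 * H1)) + d2 * H2 + d1 * H1 + e1) = 0 :=
    sub_eq_zero.mpr h23
  have key1 : Q * H1 - H1 * Q =
      -(H3 * ((H1 * H3 - H3 * H1) - (2 * H1 ^ 2 - d2 * H1 + H2 + e2)))
      - ((H1 * H3 - H3 * H1) - (2 * H1 ^ 2 - d2 * H1 + H2 + e2)) * H3 := by
    subst hQ hH3
    simp only [pow_two, mul_add, add_mul, mul_sub, sub_mul, mul_assoc, neg_mul, mul_neg,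
      mul_one, one_mul,
      (cd1 H1).symm, (cd1 H2).symm, (cd2 H1).symm, (cd2 H2).symm,
      (ce1 H1).symm, (ce1 H2).symm, (ce2 H1).symm, (ce2 H2).symm,
      (c2 H1).symm, (c2 H2).symm, (c4 H1).symm, (c4 H2).symm,
      (c2 d1).symm, (c2 d2).symm, (c2 e1).symm, (c2 e2).symm,
      (c4 d1).symm, (c4 d2).symm, (c4 e1).symm, (c4 e2).symm,
      mv (cd1 H1), mv (cd1 H2), mv (cd2 H1), mv (cd2 H2),
      mv (ce1 H1), mv (ce1 H2), mv (ce2 H1), mv (ce2 H2),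
      mv (c2 H1), mv (c2 H2), mv (c4 H1), mv (c4 H2),
      mv (c2 d1), mv (c2 d2), mv (c2 e1), mv (c2 e2),
      mv (c4 d1), mv (c4 d2), mv (c4 e1), mv (c4 e2)]
    noncomm_ring
  have key2 : Q * H2 - H2 * Q =
      -(H3 * ((H2 * H3 - H3 * H2) -
        (-(2 * (H1 * H2 + H2 * H1)) + d2 * H2 + d1 * H1 + e1)))
      - ((H2 * H3 - H3 * H2) -
        (-(2 * (H1 * H2 + H2 * H1)) + d2 * H2 + d1 * H1 + e1)) * H3
      - 2 * (((H2 * H3 - H3 * H2) -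
        (-(2 * (H1 * H2 + H2 * H1)) + d2 * H2 + d1 * H1 + e1)) * H1)
      + 2 * (H1 * ((H2 * H3 - H3 * H2) -
        (-(2 * (H1 * H2 + H2 * H1)) + d2 * H2 + d1 * H1 + e1))) := by
    subst hQ hH3
    simp only [pow_two, mul_add, add_mul, mul_sub, sub_mul, mul_assoc, neg_mul, mul_neg,
      mul_one, one_mul,
      (cd1 H1).symm, (cd1 H2).symm, (cd2 H1).symm, (cd2 H2).symm,
      (ce1 H1).symm, (ce1 H2).symm, (ce2 H1).symm, (ce2 H2).symm,
      (c2 H1).symm, (c2 H2).symm, (c4 H1).symm, (c4 H2).symm,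
      (c2 d1).symm, (c2 d2).symm, (c2 e1).symm, (c2 e2).symm,
      (c4 d1).symm, (c4 d2).symm, (c4 e1).symm, (c4 e2).symm,
      mv (cd1 H1), mv (cd1 H2), mv (cd2 H1), mv (cd2 H2),
      mv (ce1 H1), mv (ce1 H2), mv (ce2 H1), mv (ce2 H2),
      mv (c2 H1), mv (c2 H2), mv (c4 H1), mv (c4 H2),
      mv (c2 d1), mv (c2 d2), mv (c2 e1), mv (c2 e2),
      mv (c4 d1), mv (c4 d2), mv (c4 e1), mv (c4 e2)]
    noncomm_ring
  rw [e13] at key1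
  rw [e23] at key2
  simp only [mul_zero, zero_mul, neg_zero, sub_zero, add_zero] at key1 key2
  exact ⟨sub_eq_zero.mp key1, sub_eq_zero.mp key2⟩
end
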